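/- Let P be the initial semi-theory. For every functor X : P → SSet and every strict P-algebra Z there is an isomorphism of simplicial sets Map_P(X, Z) ≅ Map(X[1], Z[1]), where the right-hand side is the internal mapping complex of simplicial sets, and this isomorphism is natural in X and Z. -/

import Mathlib

open CategoryTheory Limits Topology Topology.Homotopy

noncomputable section

namespace SemiThPaper

/-! ### Weak homotopy equivalences -/

/-- The map induced by a continuous map on homotopy "groups" (sets for `N = Fin 0`). -/
def HomotopyGroup.map {X Y : Type} [TopologicalSpace X] [TopologicalSpace Y]
    (f : C(X, Y)) (N : Type) (x : X) :
    HomotopyGroup N X x → HomotopyGroup N Y (f x) :=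
  Quotient.map
    (fun g => ⟨f.comp g.1, fun y hy => by
      simp only [ContinuousMap.comp_apply]
      rw [g.2 y hy]⟩)
    (fun g h H => H.elim fun H => ⟨H.compContinuousMap f⟩)

/-- The map induced on path components. -/
def ZerothHomotopy.map {X Y : Type} [TopologicalSpace X] [TopologicalSpace Y]
    (f : C(X, Y)) : ZerothHomotopy X → ZerothHomotopy Y :=
  Quotient.map f (fun _ _ h => h.elim fun γ => ⟨γ.map f.continuous⟩)

/-- A weak homotopy equivalence of topological spaces: a continuous map inducing a
bijection on path components and on all homotopy groups at all basepoints. -/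
def IsWeakHomotopyEquiv {X Y : TopCat} (f : X ⟶ Y) : Prop :=
  Function.Bijective (ZerothHomotopy.map (f.hom : C(X, Y))) ∧
    ∀ (n : ℕ) (x : X), Function.Bijective (HomotopyGroup.map (f.hom : C(X, Y)) (Fin n) x)

/-- A weak equivalence of simplicial sets: a map whose geometric realization is a
weak homotopy equivalence. -/
def WeakEquiv {A B : SSet} (f : A ⟶ B) : Prop :=
  IsWeakHomotopyEquiv (SSet.toTop.map f)


/-! ### Semi-theories -/

/-- The objects `[1], [2], [3], …` of a semi-theory, indexed by positive integers. -/
@[ext]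
structure Ob : Type where
  val : ℕ+

instance : Coe ℕ+ Ob := ⟨Ob.mk⟩

/-- An (unpointed) semi-theory: a category with objects `[1], [2], …`
together with distinguished projection morphisms `p^n_k : [n] ⟶ [1]`, where `p^1_1 = 𝟙 [1]`. -/
structure SemiTheory : Type 1 where
  cat : Category.{0, 0} Ob
  proj : ∀ n : ℕ+, Fin n → @Quiver.Hom Ob cat.toCategoryStruct.toQuiver ⟨n⟩ ⟨1⟩
  proj_one : proj 1 ⟨0, Nat.one_pos⟩ = cat.toCategoryStruct.id ⟨1⟩

/-- The category of diagrams of simplicial sets over (the underlying category of)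
a semi-theory. -/
abbrev SemiTheory.Diag (S : SemiTheory) : Type 1 :=
  @CategoryTheory.Functor Ob S.cat SSet _

/-- The `n`-fold levelwise power of a simplicial set. -/
@[simps]
def finPow (n : ℕ+) (A : SSet) : SSet where
  obj m := Fin n → A.obj m
  map θ := ↾fun a k => A.map θ (a k)

/-- The canonical comparison map `X[n] ⟶ X[1]^n` of a diagram over a semi-theory,
whose components are induced by the projections. -/
def SemiTheory.projFan (S : SemiTheory) (X : S.Diag) (n : ℕ+) :
    (letI := S.cat; (X.obj ⟨n⟩ ⟶ finPow n (X.obj ⟨1⟩))) :=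
  letI := S.cat
  { app := fun m => ↾fun a k => (X.map (S.proj n k)).app m a
    naturality := fun m m' θ => by
      apply ConcreteCategory.hom_ext; intro a
      funext k
      exact ConcreteCategory.congr_hom ((X.map (S.proj n k)).naturality θ) a }

/-- A strict algebra over a semi-theory: the comparison maps `X[n] ⟶ X[1]^n` are
isomorphisms for all `n > 1`. -/
def SemiTheory.IsStrictAlgebra (S : SemiTheory) (X : S.Diag) : Prop :=
  ∀ n : ℕ+, 1 < (n : ℕ) → IsIso (S.projFan X n)

/-- A homotopy algebra over a semi-theory: the comparison maps `X[n] ⟶ X[1]^n` are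
weak equivalences of simplicial sets for all `n > 1`. -/
def SemiTheory.IsHomotopyAlgebra (S : SemiTheory) (X : S.Diag) : Prop :=
  ∀ n : ℕ+, 1 < (n : ℕ) → WeakEquiv (S.projFan X n)

/-- A semi-theory is an algebraic theory if composition with the projections induces
bijections `Hom([m],[n]) ≅ Hom([m],[1])^n` for all `m` and all `n > 1`. -/
def SemiTheory.IsAlgebraic (S : SemiTheory) : Prop :=
  letI := S.cat
  ∀ (m n : ℕ+), 1 < (n : ℕ) →
    Function.Bijective (fun (f : (⟨m⟩ : Ob) ⟶ ⟨n⟩) (k : Fin n) => f ≫ S.proj n k)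

/-- The comparison map `X[n] ⟶ X[1]^n` for a diagram of simplicial sets over any
category equipped with objects `[n]` and projection morphisms. -/
def projFanAt {C : Type} [Category.{0} C] (o : ℕ+ → C) (p : ∀ n : ℕ+, Fin n → (o n ⟶ o 1))
    (X : C ⥤ SSet) (n : ℕ+) : X.obj (o n) ⟶ finPow n (X.obj (o 1)) where
  app m := ↾fun a k => (X.map (p n k)).app m a
  naturality m m' θ := by
    apply ConcreteCategory.hom_ext; intro a
    funext k
    exact ConcreteCategory.congr_hom ((X.map (p n k)).naturality θ) a

/-- Strictness of a diagram with respect to given objects and projections. -/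
def IsStrictAt {C : Type} [Category.{0} C] (o : ℕ+ → C)
    (p : ∀ n : ℕ+, Fin n → (o n ⟶ o 1)) (X : C ⥤ SSet) : Prop :=
  ∀ n : ℕ+, 1 < (n : ℕ) → IsIso (projFanAt o p X n)

/-- The homotopy-algebra condition for a diagram with respect to given objects
and projections. -/
def IsHomotopyAt {C : Type} [Category.{0} C] (o : ℕ+ → C)
    (p : ∀ n : ℕ+, Fin n → (o n ⟶ o 1)) (X : C ⥤ SSet) : Prop :=
  ∀ n : ℕ+, 1 < (n : ℕ) → WeakEquiv (projFanAt o p X n)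

/-! ### Free semi-theories -/

/-- Generating data for a free semi-theory: a family of free generators that are
not projections (the projections are added separately as free generators). -/
structure GenData : Type 1 where
  gen : ℕ+ → ℕ+ → Type

/-- The generating quiver of the free semi-theory on `G`: the generators of `G`
together with projection arrows `p^n_k : [n] → [1]` for `n > 1`
(the projection `p^1_1` is the identity, i.e. the empty path). -/
inductive Arr (G : GenData) : ℕ+ → ℕ+ → Type
  | gen {a b : ℕ+} : G.gen a b → Arr G a b
  | proj {n : ℕ+} (h : 1 < (n : ℕ)) (k : Fin n) : Arr G n 1

/-- The object type of the free semi-theory on `G` (a copy of `Ob`). -/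
def FreeOb (G : GenData) : Type := Ob

instance freeQuiver (G : GenData) : Quiver (FreeOb G) :=
  ⟨fun a b => Arr G (Ob.val a) (Ob.val b)⟩

/-- The free semi-theory on `G`, as a category: the paths category on the
generating quiver. -/
abbrev FreeST (G : GenData) := CategoryTheory.Paths (FreeOb G)

/-- The object `[n]` of the free semi-theory. -/
def FreeST.of (G : GenData) (n : ℕ+) : FreeST G := (⟨n⟩ : Ob)

/-- The generating projection arrow, as an arrow of the generating quiver. -/
def projArr (G : GenData) {n : ℕ+} (h : 1 < (n : ℕ)) (k : Fin n) :
    @Quiver.Hom (FreeOb G) _ (FreeST.of G n) (FreeST.of G 1) := Arr.proj h k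

/-- The projection `p^n_k` in the free semi-theory. -/
def projPath (G : GenData) (n : ℕ+) (k : Fin n) : FreeST.of G n ⟶ FreeST.of G 1 :=
  if h : 1 < (n : ℕ) then (projArr G h k).toPath
  else eqToHom (congrArg (FreeST.of G)
    (PNat.coe_injective (by
      rw [PNat.one_coe]
      exact le_antisymm (not_lt.1 h) n.pos)))

/-- The free semi-theory on `G`, as a semi-theory. -/
def freeSemiTheory (G : GenData) : SemiTheory where
  cat := inferInstanceAs (Category (FreeST G))
  proj n k := projPath G n k
  proj_one := by
    show projPath G 1 ⟨0, Nat.one_pos⟩ = _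
    rw [projPath, dif_neg (by norm_num)]
    rfl

/-- The initial semi-theory `P` has no generators besides the projections. -/
def emptyGen : GenData := ⟨fun _ _ => PEmpty⟩

/-- The underlying category of the initial semi-theory `P`. -/
abbrev PCat := FreeST emptyGen

/-- The initial semi-theory `P`: its only non-identity morphisms are the projections. -/
def PTheory : SemiTheory := freeSemiTheory emptyGen

/-- The action of the unique morphism of semi-theories `P ⟶ C` on generating arrows. -/
def jArr (G : GenData) : ∀ {a b : ℕ+}, Arr emptyGen a b →
    @Quiver.Path (FreeOb G) _ ((⟨a⟩ : Ob) : FreeST G) ((⟨b⟩ : Ob) : FreeST G)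
  | _, _, .gen α => α.elim
  | _, _, .proj h k => (projArr G h k).toPath

/-- The unique morphism of semi-theories `P ⟶ C` into a free semi-theory. -/
def Jfree (G : GenData) : PCat ⥤ FreeST G :=
  Paths.lift
    { obj := fun n => (n : FreeST G)
      map := fun {a b} e => jArr G e }

/-! ### The completion of a free semi-theory -/

/-- Trees representing the morphisms `[n] ⟶ [1]` of the completion `C̄` of a free
semi-theory: either a single edge labelled by a projection `p^n_k`, or a tree whose
lowest edge is labelled by a component `α_i` of a non-projection generator
`α : [m] ⟶ [r]` and which is obtained by grafting `m` smaller trees. -/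
inductive CTree (G : GenData) (n : ℕ+) : Type
  | proj (k : Fin n) : CTree G n
  | node {m r : ℕ+} (α : G.gen m r) (i : Fin r) (ts : Fin m → CTree G n) : CTree G n

/-- Morphisms `[n] ⟶ [m]` in the completion: `m`-tuples of trees. -/
def CompHom (G : GenData) (n m : ℕ+) : Type := Fin m → CTree G n

/-- Grafting: substituting the trees `T k` for the initial edges labelled `p^m_k`. -/
def CTree.graft {G : GenData} {n m : ℕ+} : CTree G m → CompHom G n m → CTree G n
  | .proj k, T => T k
  | .node α i ts, T => .node α i (fun j => (ts j).graft T)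

/-- The identity of the completion. -/
def compId (G : GenData) (n : ℕ+) : CompHom G n n := fun k => .proj k

/-- Composition in the completion, by grafting. -/
def compComp {G : GenData} {a b c : ℕ+} (T : CompHom G a b) (S : CompHom G b c) :
    CompHom G a c :=
  fun j => (S j).graft T

theorem CTree.graft_id {G : GenData} {m : ℕ+} (t : CTree G m) :
    t.graft (compId G m) = t := by
  induction t with
  | proj k => rfl
  | node α i ts ih =>
      simp only [CTree.graft]
      congr 1
      funext j
      exact ih j

theorem CTree.graft_graft {G : GenData} {a b c : ℕ+} (s : CTree G c)
    (U : CompHom G b c) (T : CompHom G a b) :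
    (s.graft U).graft T = s.graft (compComp T U) := by
  induction s with
  | proj k => rfl
  | node α i ts ih =>
      simp only [CTree.graft]
      congr 1
      funext j
      exact ih j

/-- The object type of the completion (a copy of `Ob`). -/
def CompOb (G : GenData) : Type := Ob

/-- The completion `C̄` of a free semi-theory, as a category. -/
instance compCategory (G : GenData) : Category (CompOb G) where
  Hom n m := CompHom G (Ob.val n) (Ob.val m)
  id n := compId G _
  comp f g := compComp f g
  id_comp f := funext fun j => CTree.graft_id _
  comp_id f := rfl
  assoc f g h := funext fun j => (CTree.graft_graft _ _ _).symm

/-- The object `[n]` of the completion. -/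
def CompOb.of (G : GenData) (n : ℕ+) : CompOb G := (⟨n⟩ : Ob)

/-- The projection `p̂^n_k` of the completion: a single edge labelled `p^n_k`. -/
def compProj (G : GenData) (n : ℕ+) (k : Fin n) : CompOb.of G n ⟶ CompOb.of G 1 :=
  fun _ => .proj k

/-- The completion, as a semi-theory. -/
def compSemiTheory (G : GenData) : SemiTheory where
  cat := inferInstanceAs (Category (CompOb G))
  proj n k := compProj G n k
  proj_one := by
    funext i
    have h0 : i = ⟨0, Nat.one_pos⟩ := Fin.ext (Nat.lt_one_iff.mp i.isLt)
    rw [h0]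
    rfl

/-- The completion functor `Φ` on generating arrows. -/
def phiArr (G : GenData) : ∀ {a b : ℕ+}, Arr G a b → CompHom G a b
  | _, _, .gen α => fun i => .node α i (fun k => .proj k)
  | _, _, .proj _ k => fun _ => .proj k

/-- The completion functor `Φ_C : C ⟶ C̄` of a free semi-theory. -/
def phi (G : GenData) : FreeST G ⥤ CompOb G :=
  Paths.lift
    { obj := fun n => (n : CompOb G)
      map := fun {a b} e => phiArr G e }

/-! ### Discrete simplicial sets, products, mapping complexes -/

/-- The discrete simplicial set on a type. -/
@[simps]
def disc (A : Type) : SSet where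
  obj _ := A
  map _ := ↾id

/-- The map of discrete simplicial sets induced by a function. -/
@[simps]
def disc.map {A B : Type} (f : A → B) : disc A ⟶ disc B where
  app _ := ↾f

/-- The diagram of (discrete) simplicial sets corepresented by the object `[n]`
of a semi-theory. -/
def SemiTheory.corep (S : SemiTheory) (n : ℕ+) : S.Diag :=
  letI := S.cat
  { obj := fun m => disc ((⟨n⟩ : Ob) ⟶ m)
    map := fun f => disc.map (fun g => g ≫ f)
    map_id := fun m => by
      apply NatTrans.ext
      funext x; apply ConcreteCategory.hom_ext; intro (g : (⟨n⟩ : Ob) ⟶ m)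
      show g ≫ 𝟙 m = g
      simp
    map_comp := fun f f' => by
      apply NatTrans.ext
      funext x; apply ConcreteCategory.hom_ext; intro (g : (⟨n⟩ : Ob) ⟶ _)
      show g ≫ (_ ≫ _) = _
      rw [← Category.assoc]
      rfl }

/-- Levelwise product of two simplicial sets. -/
@[simps]
def mulC (A K : SSet) : SSet where
  obj m := A.obj m × K.obj m
  map θ := ↾fun p => (A.map θ p.1, K.map θ p.2)
  map_id m := by apply ConcreteCategory.hom_ext; intro p; simp
  map_comp f g := by apply ConcreteCategory.hom_ext; intro p; simp

/-- `f × id` on levelwise products. -/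
@[simps]
def mulC.mapLeft {A B : SSet} (f : A ⟶ B) (K : SSet) : mulC A K ⟶ mulC B K where
  app m := ↾fun p => (f.app m p.1, p.2)
  naturality m m' θ := by
    apply ConcreteCategory.hom_ext; intro p
    simp only [mulC_obj, mulC_map, types_comp_apply]
    exact Prod.ext (ConcreteCategory.congr_hom (f.naturality θ) p.1 :) rfl

/-- `id × g` on levelwise products. -/
@[simps]
def mulC.mapRight (A : SSet) {K L : SSet} (g : K ⟶ L) : mulC A K ⟶ mulC A L where
  app m := ↾fun p => (p.1, g.app m p.2)
  naturality m m' θ := by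
    apply ConcreteCategory.hom_ext; intro p
    simp only [mulC_obj, mulC_map, types_comp_apply]
    exact Prod.ext rfl (ConcreteCategory.congr_hom (g.naturality θ) p.2 :)

theorem mulC.mapRight_id (A K : SSet) : mulC.mapRight A (𝟙 K) = 𝟙 (mulC A K) := by
  apply NatTrans.ext; funext x; apply ConcreteCategory.hom_ext; intro p; rfl

theorem mulC.mapRight_comp (A : SSet) {K L M : SSet} (g : K ⟶ L) (h : L ⟶ M) :
    mulC.mapRight A (g ≫ h) = mulC.mapRight A g ≫ mulC.mapRight A h := by
  apply NatTrans.ext; funext x; apply ConcreteCategory.hom_ext; intro p; rfl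

/-- Naturality, in applied form. -/
theorem natApply {C : Type} [Category C] {X Y : C ⥤ SSet} (f : X ⟶ Y)
    {c c' : C} (φ : c ⟶ c') (x : SimplexCategoryᵒᵖ) (a : (X.obj c).obj x) :
    (f.app c').app x ((X.map φ).app x a) = (Y.map φ).app x ((f.app c).app x a) :=
  ConcreteCategory.congr_hom (NatTrans.congr_app (f.naturality φ) x) a

/-- The objectwise product of a diagram of simplicial sets with a constant
simplicial set. -/
@[simps]
def prodConst {C : Type} [Category C] (X : C ⥤ SSet) (K : SSet) : C ⥤ SSet where
  obj c := mulC (X.obj c) K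
  map f := mulC.mapLeft (X.map f) K
  map_id c := by
    apply NatTrans.ext; funext x; apply ConcreteCategory.hom_ext; intro p
    show ((X.map (𝟙 c)).app x p.1, p.2) = p
    rw [X.map_id]
    rfl
  map_comp f g := by
    apply NatTrans.ext; funext x; apply ConcreteCategory.hom_ext; intro p
    show ((X.map (f ≫ g)).app x p.1, p.2) = _
    rw [X.map_comp]
    rfl

/-- Functoriality of `prodConst` in the diagram variable. -/
@[simps]
def prodConst.mapX {C : Type} [Category C] {X X' : C ⥤ SSet} (f : X ⟶ X') (K : SSet) :
    prodConst X K ⟶ prodConst X' K where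
  app c := mulC.mapLeft (f.app c) K
  naturality c c' φ := by
    apply NatTrans.ext; funext x; apply ConcreteCategory.hom_ext; intro p
    simp only [prodConst_obj, prodConst_map, NatTrans.comp_app, mulC.mapLeft_app,
      types_comp_apply]
    exact Prod.ext (natApply f φ x p.1) rfl

/-- Functoriality of `prodConst` in the constant variable. -/
@[simps]
def prodConst.mapK {C : Type} [Category C] (X : C ⥤ SSet) {K L : SSet} (g : K ⟶ L) :
    prodConst X K ⟶ prodConst X L where
  app c := mulC.mapRight (X.obj c) g
  naturality c c' φ := by
    apply NatTrans.ext; funext x; apply ConcreteCategory.hom_ext; intro p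
    rfl

theorem prodConst.mapK_id {C : Type} [Category C] (X : C ⥤ SSet) (K : SSet) :
    prodConst.mapK X (𝟙 K) = 𝟙 (prodConst X K) := by
  apply NatTrans.ext; funext c
  exact mulC.mapRight_id _ _

theorem prodConst.mapK_comp {C : Type} [Category C] (X : C ⥤ SSet) {K L M : SSet}
    (g : K ⟶ L) (h : L ⟶ M) :
    prodConst.mapK X (g ≫ h) = prodConst.mapK X g ≫ prodConst.mapK X h := by
  apply NatTrans.ext; funext c
  exact mulC.mapRight_comp _ _ _

/-- The standard simplex `Δ[k]`, for `k : SimplexCategoryᵒᵖ`. -/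
def stdS (k : SimplexCategoryᵒᵖ) : SSet := SSet.stdSimplex.obj k.unop

/-- Functoriality of the standard simplex (contravariantly in `SimplexCategoryᵒᵖ`). -/
def stdMap {k l : SimplexCategoryᵒᵖ} (θ : k ⟶ l) : stdS l ⟶ stdS k :=
  SSet.stdSimplex.map θ.unop

theorem stdMap_id (k : SimplexCategoryᵒᵖ) : stdMap (𝟙 k) = 𝟙 (stdS k) :=
  SSet.stdSimplex.map_id _

theorem stdMap_comp {k l m : SimplexCategoryᵒᵖ} (θ : k ⟶ l) (η : l ⟶ m) :
    stdMap (θ ≫ η) = stdMap η ≫ stdMap θ :=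
  SSet.stdSimplex.map_comp _ _

/-- The simplicial mapping complex of two diagrams of simplicial sets: its
`m`-simplices are the natural transformations `X × Δ[m] ⟶ Y`. -/
def MapCx {C : Type} [Category C] (X Y : C ⥤ SSet) : SSet where
  obj m := prodConst X (stdS m) ⟶ Y
  map {m m'} θ := ↾fun t => prodConst.mapK X (stdMap θ) ≫ t
  map_id m := by
    apply ConcreteCategory.hom_ext; intro t
    simp [stdMap_id, prodConst.mapK_id]
  map_comp θ η := by
    apply ConcreteCategory.hom_ext; intro t
    simp [stdMap_comp, prodConst.mapK_comp]

/-- Precomposition on mapping complexes. -/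
def MapCx.pre {C : Type} [Category C] {X X' : C ⥤ SSet} (f : X' ⟶ X) (Y : C ⥤ SSet) :
    MapCx X Y ⟶ MapCx X' Y where
  app m := ↾fun t => prodConst.mapX f (stdS m) ≫ t
  naturality m m' θ := by
    apply ConcreteCategory.hom_ext; intro t
    rfl

/-- Postcomposition on mapping complexes. -/
def MapCx.post {C : Type} [Category C] (X : C ⥤ SSet) {Y Y' : C ⥤ SSet} (g : Y ⟶ Y') :
    MapCx X Y ⟶ MapCx X Y' where
  app m := ↾fun t => t ≫ g
  naturality m m' θ := by
    apply ConcreteCategory.hom_ext; intro t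
    rfl

/-- Restriction of mapping complexes along a functor. -/
def MapCx.whisk {C D : Type} [Category C] [Category D] (F : D ⥤ C) (X Y : C ⥤ SSet) :
    MapCx X Y ⟶ MapCx (F ⋙ X) (F ⋙ Y) where
  app m := ↾fun t =>
    (show prodConst (F ⋙ X) (stdS m) ⟶ F ⋙ Y from CategoryTheory.Functor.whiskerLeft F t)
  naturality m m' θ := by
    apply ConcreteCategory.hom_ext; intro t
    rfl

/-- The simplicial mapping complex of two simplicial sets: its `m`-simplices are
the maps `A × Δ[m] ⟶ B`. -/
def sMap (A B : SSet) : SSet where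
  obj m := mulC A (stdS m) ⟶ B
  map {m m'} θ := ↾fun t => mulC.mapRight A (stdMap θ) ≫ t
  map_id m := by
    apply ConcreteCategory.hom_ext; intro t
    simp [stdMap_id, mulC.mapRight_id]
  map_comp θ η := by
    apply ConcreteCategory.hom_ext; intro t
    simp [stdMap_comp, mulC.mapRight_comp]

/-- Precomposition on simplicial mapping complexes. -/
def sMap.pre {A A' : SSet} (f : A' ⟶ A) (B : SSet) : sMap A B ⟶ sMap A' B where
  app m := ↾fun t => mulC.mapLeft f (stdS m) ≫ t
  naturality m m' θ := by
    apply ConcreteCategory.hom_ext; intro t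
    rfl

/-- Postcomposition on simplicial mapping complexes. -/
def sMap.post (A : SSet) {B B' : SSet} (g : B ⟶ B') : sMap A B ⟶ sMap A B' where
  app m := ↾fun t => t ≫ g
  naturality m m' θ := by
    apply ConcreteCategory.hom_ext; intro t
    rfl


/-! ### Auxiliary development for Statement 6 -/

section Aux6

/-- The projection `p^1_k` in the free semi-theory is the identity. -/
theorem projPath_one (G : GenData) (k : Fin ((1 : ℕ+) : ℕ)) :
    projPath G 1 k = 𝟙 (FreeST.of G 1) := by
  rw [projPath, dif_neg (by norm_num)]
  rfl

/-- Evaluation at the `k`-th coordinate of a levelwise power. -/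
@[simps]
def evalPow (B : SSet) (n : ℕ+) (k : Fin n) : finPow n B ⟶ B where
  app _ := ↾fun a => a k
  naturality _ _ _ := rfl

theorem fan_eval (Z : PCat ⥤ SSet) (n : ℕ+) (k : Fin n) :
    projFanAt (FreeST.of emptyGen) (projPath emptyGen) Z n ≫
      evalPow (Z.obj (FreeST.of emptyGen 1)) n k = Z.map (projPath emptyGen n k) := rfl

/-- For a strict algebra the comparison maps are isomorphisms for all `n`,
including `n = 1`. -/
theorem isIso_fan_all (Z : PCat ⥤ SSet)
    (hZ : IsStrictAt (FreeST.of emptyGen) (projPath emptyGen) Z) (n : ℕ+) :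
    IsIso (projFanAt (FreeST.of emptyGen) (projPath emptyGen) Z n) := by
  rcases lt_or_ge 1 (n : ℕ) with h | h
  · exact hZ n h
  · have hn : n = 1 := by
      apply PNat.coe_injective
      rw [PNat.one_coe]
      exact le_antisymm h n.pos
    subst hn
    refine ⟨⟨⟨fun x => ↾fun a => a ⟨0, Nat.one_pos⟩, fun _ _ _ => rfl⟩, ?_, ?_⟩⟩
    · apply NatTrans.ext
      funext x; apply ConcreteCategory.hom_ext; intro a
      show (Z.map (projPath emptyGen 1 ⟨0, Nat.one_pos⟩)).app x a = a
      rw [projPath_one, Z.map_id]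
      rfl
    · apply NatTrans.ext
      funext x; apply ConcreteCategory.hom_ext; intro a
      funext k
      show (Z.map (projPath emptyGen 1 k)).app x (a ⟨0, Nat.one_pos⟩) = a k
      rw [projPath_one, Z.map_id]
      have hk : k = ⟨0, Nat.one_pos⟩ := Fin.ext (Nat.lt_one_iff.mp k.isLt)
      rw [hk]
      rfl

/-- The inverse of the comparison map of a strict algebra. -/
def invFan (Z : PCat ⥤ SSet)
    (hZ : IsStrictAt (FreeST.of emptyGen) (projPath emptyGen) Z) (n : ℕ+) :
    finPow n (Z.obj (FreeST.of emptyGen 1)) ⟶ Z.obj (FreeST.of emptyGen n) :=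
  @inv _ _ _ _ (projFanAt (FreeST.of emptyGen) (projPath emptyGen) Z n)
    (isIso_fan_all Z hZ n)

theorem fan_invFan (Z : PCat ⥤ SSet)
    (hZ : IsStrictAt (FreeST.of emptyGen) (projPath emptyGen) Z) (n : ℕ+) :
    projFanAt (FreeST.of emptyGen) (projPath emptyGen) Z n ≫ invFan Z hZ n = 𝟙 _ := by
  haveI := isIso_fan_all Z hZ n
  exact IsIso.hom_inv_id _

theorem invFan_fan (Z : PCat ⥤ SSet)
    (hZ : IsStrictAt (FreeST.of emptyGen) (projPath emptyGen) Z) (n : ℕ+) :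
    invFan Z hZ n ≫ projFanAt (FreeST.of emptyGen) (projPath emptyGen) Z n = 𝟙 _ := by
  haveI := isIso_fan_all Z hZ n
  exact IsIso.inv_hom_id _

variable (X Z : PCat ⥤ SSet)

/-- The comparison map from a product-with-constant diagram into the power of `Z[1]`,
assembled from a single map `u : X[1] × Δ[m] ⟶ Z[1]`. -/
def phiMap (m : SimplexCategoryᵒᵖ)
    (u : mulC (X.obj (FreeST.of emptyGen 1)) (stdS m) ⟶ Z.obj (FreeST.of emptyGen 1))
    (c : PCat) :
    mulC (X.obj c) (stdS m) ⟶ finPow (Ob.val c) (Z.obj (FreeST.of emptyGen 1)) where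
  app x := ↾fun q k => u.app x ((X.map (projPath emptyGen (Ob.val c) k)).app x q.1, q.2)
  naturality x x' θ := by
    apply ConcreteCategory.hom_ext; intro q
    funext k
    show u.app x' ((X.map (projPath emptyGen (Ob.val c) k)).app x' ((X.obj c).map θ q.1),
        (stdS m).map θ q.2) = (Z.obj (FreeST.of emptyGen 1)).map θ
        (u.app x ((X.map (projPath emptyGen (Ob.val c) k)).app x q.1, q.2))
    have h1 : (X.map (projPath emptyGen (Ob.val c) k)).app x' ((X.obj c).map θ q.1) =
        (X.obj (FreeST.of emptyGen 1)).map θ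
          ((X.map (projPath emptyGen (Ob.val c) k)).app x q.1) :=
      ConcreteCategory.congr_hom ((X.map (projPath emptyGen (Ob.val c) k)).naturality θ) q.1
    rw [h1]
    have h2 := ConcreteCategory.congr_hom (u.naturality θ)
      (show (mulC (X.obj (FreeST.of emptyGen 1)) (stdS m)).obj x from
        ((X.map (projPath emptyGen (Ob.val c) k)).app x q.1, q.2))
    simp only [mulC_map] at h2
    exact h2

theorem phiMap_one (m : SimplexCategoryᵒᵖ)
    (u : mulC (X.obj (FreeST.of emptyGen 1)) (stdS m) ⟶ Z.obj (FreeST.of emptyGen 1)) :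
    phiMap X Z m u (FreeST.of emptyGen 1) =
      u ≫ projFanAt (FreeST.of emptyGen) (projPath emptyGen) Z 1 := by
  apply NatTrans.ext
  funext x; apply ConcreteCategory.hom_ext; intro q
  funext k
  change Fin ((1 : ℕ+) : ℕ) at k
  show u.app x ((X.map (projPath emptyGen 1 k)).app x q.1, q.2) =
    (Z.map (projPath emptyGen 1 k)).app x (u.app x q)
  rw [projPath_one, X.map_id, Z.map_id]
  rfl

variable (hZ : IsStrictAt (FreeST.of emptyGen) (projPath emptyGen) Z)

/-- A generating arrow as a quiver morphism. -/
def arrHom {n b : ℕ+} (e : Arr emptyGen n b) :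
    @Quiver.Hom (FreeOb emptyGen) _ (FreeST.of emptyGen n) (FreeST.of emptyGen b) := e

theorem Gapp_nat_arrow (m : SimplexCategoryᵒᵖ)
    (u : mulC (X.obj (FreeST.of emptyGen 1)) (stdS m) ⟶ Z.obj (FreeST.of emptyGen 1))
    {n b : ℕ+} (e : Arr emptyGen n b) :
    (prodConst X (stdS m)).map (arrHom e).toPath ≫
      (phiMap X Z m u (FreeST.of emptyGen b) ≫ invFan Z hZ b) =
    (phiMap X Z m u (FreeST.of emptyGen n) ≫ invFan Z hZ n) ≫
      Z.map (arrHom e).toPath := by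
  cases e with
  | gen α => exact α.elim
  | proj h k =>
    have hp : (arrHom (Arr.proj h k)).toPath = projPath emptyGen n k := by
      rw [projPath, dif_pos h]
      rfl
    rw [hp]
    have A : phiMap X Z m u (FreeST.of emptyGen 1) ≫ invFan Z hZ 1 = u := by
      rw [phiMap_one]
      exact (Category.assoc _ _ _).trans
        ((congrArg (u ≫ ·) (fan_invFan Z hZ 1)).trans (Category.comp_id u))
    refine (congrArg (_ ≫ ·) A).trans ?_
    have C : invFan Z hZ n ≫ Z.map (projPath emptyGen n k) =
        evalPow (Z.obj (FreeST.of emptyGen 1)) n k := by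
      rw [← fan_eval Z n k, ← Category.assoc, invFan_fan, Category.id_comp]
    refine Eq.trans ?_ ((Category.assoc _ _ _).trans (congrArg (_ ≫ ·) C)).symm
    rfl

theorem Gapp_nat_path (m : SimplexCategoryᵒᵖ)
    (u : mulC (X.obj (FreeST.of emptyGen 1)) (stdS m) ⟶ Z.obj (FreeST.of emptyGen 1))
    {a b : PCat} (f : a ⟶ b) :
    (prodConst X (stdS m)).map f ≫ (phiMap X Z m u b ≫ invFan Z hZ (Ob.val b)) =
    (phiMap X Z m u a ≫ invFan Z hZ (Ob.val a)) ≫ Z.map f := by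
  change @Quiver.Path (FreeOb emptyGen) (freeQuiver emptyGen) a b at f
  induction f with
  | nil =>
    show (prodConst X (stdS m)).map (𝟙 a) ≫ _ = _ ≫ Z.map (𝟙 a)
    rw [CategoryTheory.Functor.map_id, CategoryTheory.Functor.map_id]
    exact (Category.id_comp _).trans (Category.comp_id _).symm
  | cons p e ih =>
    rename_i mid fin
    show (prodConst X (stdS m)).map (p ≫ Quiver.Hom.toPath e) ≫
        (phiMap X Z m u fin ≫ invFan Z hZ (Ob.val fin)) =
      (phiMap X Z m u a ≫ invFan Z hZ (Ob.val a)) ≫ Z.map (p ≫ Quiver.Hom.toPath e)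
    have sq : (prodConst X (stdS m)).map (Quiver.Hom.toPath e) ≫
        (phiMap X Z m u fin ≫ invFan Z hZ (Ob.val fin)) =
        (phiMap X Z m u mid ≫ invFan Z hZ (Ob.val mid)) ≫ Z.map (Quiver.Hom.toPath e) :=
      Gapp_nat_arrow X Z hZ m u e
    exact (congrArg (· ≫ _) ((prodConst X (stdS m)).map_comp p (Quiver.Hom.toPath e))).trans <|
      (Category.assoc _ _ _).trans <| (congrArg (_ ≫ ·) sq).trans <|
      (Category.assoc _ _ _).symm.trans <| (congrArg (· ≫ _) ih).trans <|
      (Category.assoc _ _ _).trans (congrArg (_ ≫ ·) (Z.map_comp p (Quiver.Hom.toPath e)).symm)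

/-- The natural transformation `X × Δ[m] ⟶ Z` assembled from `u`. -/
def Gapp (m : SimplexCategoryᵒᵖ)
    (u : mulC (X.obj (FreeST.of emptyGen 1)) (stdS m) ⟶ Z.obj (FreeST.of emptyGen 1)) :
    prodConst X (stdS m) ⟶ Z where
  app c := phiMap X Z m u c ≫ invFan Z hZ (Ob.val c)
  naturality a b f := Gapp_nat_path X Z hZ m u f

/-- The inverse map of mapping complexes. -/
def Gmap : sMap (X.obj (FreeST.of emptyGen 1)) (Z.obj (FreeST.of emptyGen 1)) ⟶
    MapCx X Z where
  app m := ↾fun u => Gapp X Z hZ m u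
  naturality m m' θ := by
    apply ConcreteCategory.hom_ext; intro u
    apply NatTrans.ext
    funext c
    show phiMap X Z m' (mulC.mapRight _ (stdMap θ) ≫ u) c ≫ invFan Z hZ (Ob.val c) =
      mulC.mapRight (X.obj c) (stdMap θ) ≫ (phiMap X Z m u c ≫ invFan Z hZ (Ob.val c))
    have hph : phiMap X Z m' (mulC.mapRight _ (stdMap θ) ≫ u) c =
        mulC.mapRight (X.obj c) (stdMap θ) ≫ phiMap X Z m u c := rfl
    rw [hph, Category.assoc]

/-- The forward map of mapping complexes: evaluation at the object `[1]`. -/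
def Fmap : MapCx X Z ⟶
    sMap (X.obj (FreeST.of emptyGen 1)) (Z.obj (FreeST.of emptyGen 1)) where
  app m := ↾fun t => t.app (FreeST.of emptyGen 1)
  naturality m m' θ := rfl

/-- The natural isomorphism of Statement 6. -/
def eIso : MapCx X Z ≅
    sMap (X.obj (FreeST.of emptyGen 1)) (Z.obj (FreeST.of emptyGen 1)) where
  hom := Fmap X Z
  inv := Gmap X Z hZ
  hom_inv_id := by
    apply NatTrans.ext
    funext m; apply ConcreteCategory.hom_ext; intro t
    apply NatTrans.ext
    funext c
    show phiMap X Z m (t.app (FreeST.of emptyGen 1)) c ≫ invFan Z hZ (Ob.val c) = t.app c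
    have hphi : phiMap X Z m (t.app (FreeST.of emptyGen 1)) c =
        t.app c ≫ projFanAt (FreeST.of emptyGen) (projPath emptyGen) Z (Ob.val c) := by
      apply NatTrans.ext
      funext x; apply ConcreteCategory.hom_ext; intro q
      funext k
      exact natApply t (projPath emptyGen (Ob.val c) k) x q
    rw [hphi]
    exact (Category.assoc _ _ _).trans
      ((congrArg (t.app c ≫ ·) (fan_invFan Z hZ _)).trans (Category.comp_id _))
  inv_hom_id := by
    apply NatTrans.ext
    funext m; apply ConcreteCategory.hom_ext; intro u
    show phiMap X Z m u (FreeST.of emptyGen 1) ≫ invFan Z hZ 1 = u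
    exact ((congrArg (· ≫ invFan Z hZ 1) (phiMap_one X Z m u)).trans
      (Category.assoc _ _ _)).trans
      ((congrArg (u ≫ ·) (fan_invFan Z hZ 1)).trans (Category.comp_id u))

end Aux6

/-! ### STATEMENT 6
For every `P`-diagram `X` and every strict `P`-algebra `Z` there is an
isomorphism `Map_P(X,Z) ≅ Map(X[1],Z[1])` of simplicial sets, natural in `X`
and `Z`. -/
theorem mapping_complex_of_strict_P_algebra :
    ∃ e : ∀ (X Z : PCat ⥤ SSet),
        IsStrictAt (FreeST.of emptyGen) (projPath emptyGen) Z →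
        (MapCx X Z ≅ sMap (X.obj (FreeST.of emptyGen 1)) (Z.obj (FreeST.of emptyGen 1))),
      (∀ (X X' Z : PCat ⥤ SSet)
          (hZ : IsStrictAt (FreeST.of emptyGen) (projPath emptyGen) Z) (f : X' ⟶ X),
        MapCx.pre f Z ≫ (e X' Z hZ).hom =
          (e X Z hZ).hom ≫ sMap.pre (f.app (FreeST.of emptyGen 1)) _) ∧
      (∀ (X Z Z' : PCat ⥤ SSet)
          (hZ : IsStrictAt (FreeST.of emptyGen) (projPath emptyGen) Z)
          (hZ' : IsStrictAt (FreeST.of emptyGen) (projPath emptyGen) Z') (g : Z ⟶ Z'),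
        MapCx.post X g ≫ (e X Z' hZ').hom =
          (e X Z hZ).hom ≫ sMap.post _ (g.app (FreeST.of emptyGen 1))) := by
  refine ⟨fun X Z hZ => eIso X Z hZ, ?_, ?_⟩
  · intro X X' Z hZ f
    rfl
  · intro X Z Z' hZ hZ' g
    rfl

end SemiThPaper
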